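/- One-step descent for SGD with SPS_max under convexity and strong convexity: if f_i are convex and differentiable, f = E_i[f_i] is μ-strongly convex, γ_k = min{(f_i(x^k) − f_i*)/(c‖∇f_i(x^k)‖²), γ_b} with c ≥ 1/2, and x^{k+1} = x^k − γ_k ∇f_i(x^k), then E_i‖x^{k+1} − x*‖² ≤ (1 − μ·min{1/(2cL_max), γ_b})‖x^k − x*‖² + 2γ_b σ², where σ² = E_i[f_i(x*) − f_i*] and each f_i is L_i-smooth with L_max = max_i L_i. -/

import Mathlib

open scoped RealInnerProductSpace

lemma my_descent {E : Type*} [NormedAddCommGroup E] [InnerProductSpace ℝ E] [CompleteSpace E]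
    (f : E → ℝ) (G : E → E) (hgrad : ∀ x, HasGradientAt f (G x) x)
    (L : ℝ) (hsmooth : ∀ x y, ‖G x - G y‖ ≤ L * ‖x - y‖) (x y : E) :
    f y ≤ f x + ⟪G x, y - x⟫ + L / 2 * ‖y - x‖ ^ 2 := by
  set v := y - x with hv
  have hline : ∀ t : ℝ, HasDerivAt (fun t : ℝ => x + t • v) v t := fun t => by
    simpa using ((hasDerivAt_id t).smul_const v).const_add x
  set ψ : ℝ → ℝ := fun t => f (x + t • v) - t * ⟪G x, v⟫ - L / 2 * (t ^ 2 * ‖v‖ ^ 2) with hψdef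
  have hψ : ∀ t : ℝ, HasDerivAt ψ
      (⟪G (x + t • v), v⟫ - ⟪G x, v⟫ - L / 2 * ((2 * t) * ‖v‖ ^ 2)) t := by
    intro t
    have h1 : HasDerivAt (fun t : ℝ => f (x + t • v)) ⟪G (x + t • v), v⟫ t := by
      have := ((hgrad (x + t • v)).hasFDerivAt).comp_hasDerivAt t (hline t)
      simp at this
      exact this
    have h2 : HasDerivAt (fun t : ℝ => t * ⟪G x, v⟫) ⟪G x, v⟫ t := by
      simpa using (hasDerivAt_mul_const (⟪G x, v⟫ : ℝ) (x := t))
    have h3 : HasDerivAt (fun t : ℝ => L / 2 * (t ^ 2 * ‖v‖ ^ 2)) (L / 2 * ((2 * t) * ‖v‖ ^ 2)) t := by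
      have := ((hasDerivAt_pow 2 t).mul_const (‖v‖ ^ 2)).const_mul (L / 2)
      refine this.congr_deriv ?_
      ring
    exact (h1.sub h2).sub h3
  have mono : AntitoneOn ψ (Set.Icc 0 1) := by
    apply antitoneOn_of_deriv_nonpos (convex_Icc 0 1)
    · exact fun t _ => (hψ t).continuousAt.continuousWithinAt
    · exact fun t _ => (hψ t).differentiableAt.differentiableWithinAt
    · intro t ht
      rw [interior_Icc] at ht
      rw [(hψ t).deriv]
      have h0 : ⟪G (x + t • v) - G x, v⟫ ≤ L * t * ‖v‖ ^ 2 := by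
        calc ⟪G (x + t • v) - G x, v⟫ ≤ ‖G (x + t • v) - G x‖ * ‖v‖ := real_inner_le_norm _ _
        _ ≤ (L * ‖(x + t • v) - x‖) * ‖v‖ :=
            mul_le_mul_of_nonneg_right (hsmooth _ _) (norm_nonneg v)
        _ = L * t * ‖v‖ ^ 2 := by
            rw [add_sub_cancel_left, norm_smul]
            rw [Real.norm_eq_abs, abs_of_nonneg ht.1.le]
            ring
      rw [inner_sub_left] at h0
      linarith
  have h01 := mono (Set.left_mem_Icc.2 zero_le_one) (Set.right_mem_Icc.2 zero_le_one) zero_le_one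
  have e0 : ψ 0 = f x := by simp [hψdef]
  have e1 : ψ 1 = f y - ⟪G x, v⟫ - L / 2 * ‖v‖ ^ 2 := by
    simp [hψdef, hv]
  rw [e0, e1] at h01
  linarith

set_option maxHeartbeats 1000000 in
/-- One-step descent for SGD with `SPS_max` under convexity of the `f i` and strong
convexity of `f = E_i[f_i]`: with `γ_i = min{(f_i(x^k) − f_i*)/(c‖∇f_i(x^k)‖²), γ_b}`,
`c ≥ 1/2`, and `x^{k+1} = x^k − γ_i ∇f_i(x^k)`, one has
`E_i‖x^{k+1} − x*‖² ≤ (1 − μ min{1/(2cL_max), γ_b})‖x^k − x*‖² + 2 γ_b σ²`. -/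
theorem stmt4 {d n : ℕ} (hn : 0 < n)
    (f : Fin n → EuclideanSpace ℝ (Fin d) → ℝ)
    (G : Fin n → EuclideanSpace ℝ (Fin d) → EuclideanSpace ℝ (Fin d))
    (hgrad : ∀ i x, HasGradientAt (f i) (G i x) x)
    (hconv : ∀ i x y, f i y ≥ f i x + ⟪G i x, y - x⟫)
    (L : Fin n → ℝ) (hL : ∀ i, 0 < L i)
    (hsmooth : ∀ i x y, ‖G i x - G i y‖ ≤ L i * ‖x - y‖)
    (fstar : Fin n → ℝ) (hfstar : ∀ i, IsGLB (Set.range (f i)) (fstar i))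
    (F : EuclideanSpace ℝ (Fin d) → ℝ) (hF : ∀ x, F x = (1 / (n : ℝ)) * ∑ i, f i x)
    (GF : EuclideanSpace ℝ (Fin d) → EuclideanSpace ℝ (Fin d))
    (hGF : ∀ x, HasGradientAt F (GF x) x)
    (μ : ℝ) (hμ : 0 < μ)
    (hsc : ∀ x y, F y ≥ F x + ⟪GF x, y - x⟫ + μ / 2 * ‖y - x‖ ^ 2)
    (xstar : EuclideanSpace ℝ (Fin d)) (hxstar : ∀ y, F xstar ≤ F y)
    (σ2 : ℝ) (hσ2 : σ2 = (1 / (n : ℝ)) * ∑ i, (f i xstar - fstar i))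
    (c γb : ℝ) (hc : c ≥ 1 / 2) (hγb : 0 < γb)
    (Lmax : ℝ) (hLmax : Lmax = Finset.univ.sup' ⟨⟨0, hn⟩, Finset.mem_univ _⟩ L)
    (xk : EuclideanSpace ℝ (Fin d))
    (γ : Fin n → ℝ)
    (hγ : ∀ i, γ i = min ((f i xk - fstar i) / (c * ‖G i xk‖ ^ 2)) γb)
    (xnext : Fin n → EuclideanSpace ℝ (Fin d))
    (hxnext : ∀ i, xnext i = xk - γ i • G i xk) :
    (1 / (n : ℝ)) * ∑ i, ‖xnext i - xstar‖ ^ 2 ≤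
      (1 - μ * min (1 / (2 * c * Lmax)) γb) * ‖xk - xstar‖ ^ 2 + 2 * γb * σ2 := by
  have hnR : (0 : ℝ) < (n : ℝ) := by exact_mod_cast hn
  have hc0 : (0 : ℝ) < c := lt_of_lt_of_le (by norm_num) hc
  set w := xk - xstar with hw
  set A := ‖w‖ ^ 2 with hA
  set α := min (1 / (2 * c * Lmax)) γb with hα
  -- basic facts
  have hLle : ∀ i, L i ≤ Lmax := by
    intro i
    rw [hLmax]
    exact Finset.le_sup' L (Finset.mem_univ i)
  have hLmax0 : 0 < Lmax := lt_of_lt_of_le (hL ⟨0, hn⟩) (hLle ⟨0, hn⟩)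
  have hα0 : 0 < α := lt_min (by positivity) hγb
  have hαγb : α ≤ γb := min_le_right _ _
  have hhi : ∀ i, 0 ≤ f i xk - fstar i := by
    intro i
    have := (hfstar i).1 (Set.mem_range_self xk)
    linarith
  have hsi : ∀ i, 0 ≤ f i xstar - fstar i := by
    intro i
    have := (hfstar i).1 (Set.mem_range_self xstar)
    linarith
  -- lower bound on suboptimality from smoothness
  have hB : ∀ i, ‖G i xk‖ ^ 2 / (2 * L i) ≤ f i xk - fstar i := by
    intro i
    have hd := my_descent (f i) (G i) (hgrad i) (L i) (hsmooth i) xk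
      (xk - (L i)⁻¹ • G i xk)
    have hval : fstar i ≤ f i (xk - (L i)⁻¹ • G i xk) :=
      (hfstar i).1 (Set.mem_range_self _)
    have he1 : (xk - (L i)⁻¹ • G i xk) - xk = -((L i)⁻¹ • G i xk) := by abel
    rw [he1] at hd
    rw [inner_neg_right, real_inner_smul_right, real_inner_self_eq_norm_sq] at hd
    rw [norm_neg, norm_smul, Real.norm_eq_abs, abs_of_nonneg (inv_nonneg.2 (hL i).le)] at hd
    have hLi := hL i
    have : f i (xk - (L i)⁻¹ • G i xk) ≤ f i xk - ‖G i xk‖ ^ 2 / (2 * L i) := by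
      rw [mul_pow] at hd
      have h2 : (L i)⁻¹ * ‖G i xk‖ ^ 2 - L i / 2 * ((L i)⁻¹ ^ 2 * ‖G i xk‖ ^ 2)
          = ‖G i xk‖ ^ 2 / (2 * L i) := by
        field_simp
        ring
      linarith [hd, h2.symm.le]
    linarith
  -- per-index key inequality
  have key : ∀ i, ‖xnext i - xstar‖ ^ 2 ≤
      A - 2 * α * ⟪G i xk, w⟫ + 2 * α * (f i xk - fstar i)
        + 2 * (γb - α) * (f i xstar - fstar i) := by
    intro i
    have hconvi : f i xk - f i xstar ≤ ⟪G i xk, w⟫ := by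
      have := hconv i xk xstar
      have he : xstar - xk = -w := by rw [hw]; abel
      rw [he, inner_neg_right] at this
      linarith
    by_cases hG0 : G i xk = 0
    · -- gradient zero: γ i = 0, xnext i = xk
      have hγ0 : γ i = 0 := by
        rw [hγ i, hG0]
        simp [min_eq_left hγb.le]
      have hx : xnext i = xk := by rw [hxnext i, hγ0]; simp
      rw [hx, ← hw, ← hA, hG0, inner_zero_left]
      nlinarith [hhi i, hsi i, hα0.le, hαγb]
    · -- gradient nonzero
      have hGnorm : 0 < ‖G i xk‖ := norm_pos_iff.mpr hG0
      have hGpos : 0 < ‖G i xk‖ ^ 2 := by positivity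
      set g := γ i with hg
      set h := f i xk - fstar i with hh
      set s := f i xstar - fstar i with hs
      -- γ i ≥ α
      have h1' : ‖G i xk‖ ^ 2 ≤ 2 * Lmax * h := by
        have hb := hB i
        rw [div_le_iff₀ (by linarith [hL i])] at hb
        nlinarith [hLle i, hL i, hhi i]
      have hsps : 1 / (2 * c * Lmax) ≤ h / (c * ‖G i xk‖ ^ 2) := by
        have hp1 : (0:ℝ) < 2 * c * Lmax := mul_pos (mul_pos two_pos hc0) hLmax0
        have hp2 : (0:ℝ) < c * ‖G i xk‖ ^ 2 := mul_pos hc0 hGpos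
        rw [div_le_div_iff₀ hp1 hp2]
        have t0 : c * ‖G i xk‖ ^ 2 ≤ c * (2 * Lmax * h) := mul_le_mul_of_nonneg_left h1' hc0.le
        nlinarith [t0]
      have hgα : α ≤ g := by
        rw [hg, hγ i]
        exact le_min (le_trans (min_le_left _ _) hsps) (min_le_right _ _)
      have hgγb : g ≤ γb := by rw [hg, hγ i]; exact min_le_right _ _
      have hg0 : 0 < g := lt_of_lt_of_le hα0 hgα
      -- γ i * (c * ‖G‖²) ≤ h
      have hgh : g * (c * ‖G i xk‖ ^ 2) ≤ h := by
        have : g ≤ h / (c * ‖G i xk‖ ^ 2) := by rw [hg, hγ i]; exact min_le_left _ _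
        rwa [le_div_iff₀ (by positivity)] at this
      have hquad : g ^ 2 * ‖G i xk‖ ^ 2 ≤ 2 * g * h := by
        have t1 : g * (g * (c * ‖G i xk‖ ^ 2)) ≤ g * h := mul_le_mul_of_nonneg_left hgh hg0.le
        have t2 : (0:ℝ) ≤ (c - 1/2) * (g ^ 2 * ‖G i xk‖ ^ 2) :=
          mul_nonneg (by linarith) (by positivity)
        nlinarith [t1, t2]
      -- expand the norm
      have hexp : ‖xnext i - xstar‖ ^ 2 = A - 2 * g * ⟪G i xk, w⟫ + g ^ 2 * ‖G i xk‖ ^ 2 := by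
        rw [hxnext i]
        have he : xk - g • G i xk - xstar = w - g • G i xk := by rw [hw]; abel
        rw [he, norm_sub_sq_real, real_inner_smul_right, norm_smul, Real.norm_eq_abs,
          mul_pow, sq_abs, real_inner_comm, ← hA]
        ring
      rw [hexp]
      have t3 : (g - α) * (f i xk - f i xstar) ≤ (g - α) * ⟪G i xk, w⟫ :=
        mul_le_mul_of_nonneg_left hconvi (sub_nonneg.2 hgα)
      have t4 : (0:ℝ) ≤ (γb - g) * s := mul_nonneg (sub_nonneg.2 hgγb) (hsi i)
      nlinarith [t3, t4, hquad]
  -- gradient of F at xk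
  have hGFxk : GF xk = (1 / (n : ℝ)) • ∑ i, G i xk := by
    have h1 : HasFDerivAt F (InnerProductSpace.toDual ℝ _ (GF xk)) xk := (hGF xk).hasFDerivAt
    have h2 : HasFDerivAt (fun x => (1 / (n : ℝ)) * ∑ i, f i x)
        ((1 / (n : ℝ)) • ∑ i, InnerProductSpace.toDual ℝ _ (G i xk)) xk :=
      HasFDerivAt.const_mul (HasFDerivAt.fun_sum fun i _ => (hgrad i xk).hasFDerivAt) _
    have hFfun : F = fun x => (1 / (n : ℝ)) * ∑ i, f i x := funext hF
    rw [← hFfun] at h2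
    have h3 := h1.unique h2
    apply (InnerProductSpace.toDual ℝ (EuclideanSpace ℝ (Fin d))).injective
    rw [h3, map_smul, map_sum]
  have hP : ⟪GF xk, w⟫ = (1 / (n : ℝ)) * ∑ i, ⟪G i xk, w⟫ := by
    rw [hGFxk, real_inner_smul_left, sum_inner (𝕜 := ℝ)]
  -- strong convexity bound
  have hscb : F xk - F xstar + μ / 2 * A ≤ ⟪GF xk, w⟫ := by
    have := hsc xk xstar
    have he : xstar - xk = -w := by rw [hw]; abel
    rw [he, inner_neg_right] at this
    have hn2 : ‖-w‖ ^ 2 = A := by rw [norm_neg, hA]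
    rw [hn2] at this
    linarith
  -- sum the per-index bounds
  have hsumle : (1 / (n : ℝ)) * ∑ i, ‖xnext i - xstar‖ ^ 2 ≤
      (1 / (n : ℝ)) * ∑ i, (A - 2 * α * ⟪G i xk, w⟫ + 2 * α * (f i xk - fstar i)
        + 2 * (γb - α) * (f i xstar - fstar i)) :=
    mul_le_mul_of_nonneg_left (Finset.sum_le_sum fun i _ => key i) (by positivity)
  have hsval : (1 / (n : ℝ)) * ∑ i, (A - 2 * α * ⟪G i xk, w⟫ + 2 * α * (f i xk - fstar i)
        + 2 * (γb - α) * (f i xstar - fstar i))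
      = A - 2 * α * ⟪GF xk, w⟫ + 2 * α * (F xk - F xstar + σ2) + 2 * (γb - α) * σ2 := by
    have hne : (n : ℝ) ≠ 0 := ne_of_gt hnR
    have hcard : ∑ _i : Fin n, A = (n : ℝ) * A := by
      rw [Finset.sum_const, Finset.card_univ, Fintype.card_fin, nsmul_eq_mul]
    have e2 : ∑ i : Fin n, f i xk = (n : ℝ) * F xk := by rw [hF xk]; field_simp
    have e3 : ∑ i : Fin n, f i xstar = (n : ℝ) * F xstar := by rw [hF xstar]; field_simp
    have e4 : ∑ i : Fin n, fstar i = (n : ℝ) * F xstar - (n : ℝ) * σ2 := by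
      have h5 : (n : ℝ) * σ2 = ∑ i : Fin n, f i xstar - ∑ i : Fin n, fstar i := by
        rw [hσ2, Finset.sum_sub_distrib]; field_simp
      linarith [h5, e3]
    rw [hP]
    simp only [Finset.sum_add_distrib, Finset.sum_sub_distrib, ← Finset.mul_sum, hcard,
      e2, e3, e4]
    field_simp
    ring
  refine le_trans (le_of_le_of_eq hsumle hsval) ?_
  nlinarith [mul_le_mul_of_nonneg_left hscb hα0.le]
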